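/- Let m_1, m_2, m_3 > 0, let θ_1, θ_2, θ_3 ∈ ℝ with cos θ_k ≠ 0 for all k, let u_12, u_23, u_31 ∈ ℝ and ω ∈ ℝ, and suppose u_12/(cos θ_1 cos θ_2) = u_23/(cos θ_2 cos θ_3) = u_31/(cos θ_3 cos θ_1) = ω²/(m_1 cos²θ_1 + m_2 cos²θ_2 + m_3 cos²θ_3). Then the angular velocity satisfies ω² = u_12 · u_23 · u_31 · ( m_1/u_23² + m_2/u_31² + m_3/u_12² ). -/

import Mathlib

open Real

/-- Formula for the angular velocity of a Lagrangian relative equilibrium: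
`ω² = u_12 u_23 u_31 (m_1/u_23² + m_2/u_31² + m_3/u_12²)`. -/
theorem LRE_angular_velocity
    (m1 m2 m3 θ1 θ2 θ3 u12 u23 u31 ω : ℝ)
    (hm1 : 0 < m1) (hm2 : 0 < m2) (hm3 : 0 < m3)
    (hc1 : Real.cos θ1 ≠ 0) (hc2 : Real.cos θ2 ≠ 0) (hc3 : Real.cos θ3 ≠ 0)
    (h12 : u12 / (Real.cos θ1 * Real.cos θ2) = u23 / (Real.cos θ2 * Real.cos θ3))
    (h23 : u23 / (Real.cos θ2 * Real.cos θ3) = u31 / (Real.cos θ3 * Real.cos θ1))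
    (h31 : u31 / (Real.cos θ3 * Real.cos θ1)
      = ω ^ 2 / (m1 * Real.cos θ1 ^ 2 + m2 * Real.cos θ2 ^ 2 + m3 * Real.cos θ3 ^ 2)) :
    ω ^ 2 = u12 * u23 * u31 * (m1 / u23 ^ 2 + m2 / u31 ^ 2 + m3 / u12 ^ 2) := by
  set c1 := Real.cos θ1
  set c2 := Real.cos θ2
  set c3 := Real.cos θ3
  set lam := u31 / (c3 * c1) with hlam
  have hM : 0 < m1 * c1 ^ 2 + m2 * c2 ^ 2 + m3 * c3 ^ 2 := by
    have h1 : 0 < m1 * c1 ^ 2 := mul_pos hm1 (by positivity)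
    have h2 : 0 < m2 * c2 ^ 2 := mul_pos hm2 (by positivity)
    have h3 : 0 < m3 * c3 ^ 2 := mul_pos hm3 (by positivity)
    linarith
  have hu31 : u31 = lam * (c3 * c1) := by
    rw [hlam, div_mul_cancel₀ _ (mul_ne_zero hc3 hc1)]
  have hu23 : u23 = lam * (c2 * c3) := by
    field_simp at h23
    linarith [h23]
  have hu12 : u12 = lam * (c1 * c2) := by
    rw [div_eq_div_iff (mul_ne_zero hc1 hc2) (mul_ne_zero hc2 hc3), hu23] at h12
    apply mul_right_cancel₀ (mul_ne_zero hc2 hc3)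
    linear_combination h12
  have hω : ω ^ 2 = lam * (m1 * c1 ^ 2 + m2 * c2 ^ 2 + m3 * c3 ^ 2) := by
    rw [eq_div_iff (ne_of_gt hM)] at h31
    linarith [h31]
  rcases eq_or_ne lam 0 with h0 | h0
  · simp [hu12, hu23, hu31, hω, h0]
  · rw [hω, hu12, hu23, hu31]
    field_simp
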